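/- Let c be a real number and consider R(Y) = Y(Y+1)/(c(Y+1)+Y) in ℝ(Y). Then 1/R = 1/(Y+1) + c/Y as rational functions, and if c ∉ ℚ then there is no a ∈ ℝ^× and U ∈ ℝ(Y)^× with 1/R = a·U′/U, where ′ denotes the derivation d/dY on ℝ(Y). -/

import Mathlib

/-!
Let `R(Y) = Y(Y+1)/(c(Y+1)+Y)` in `ℝ(Y)`, where `′` denotes the derivation
`d/dY` on `ℝ(Y)` (the unique `ℝ`-linear derivation with `Y′ = 1`).  Then
`1/R = 1/(Y+1) + c/Y`, and if `c ∉ ℚ` then there are no `a ∈ ℝ^×` and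
`U ∈ ℝ(Y)^×` with `1/R = a · U′/U`.
-/

open Polynomial

noncomputable section

local notation "K" => RatFunc ℝ

-- B: derivation of image of polynomial
lemma aux_map_poly (D : Derivation ℝ K K) (hD : D RatFunc.X = 1) (p : ℝ[X]) :
    D (algebraMap ℝ[X] K p) = algebraMap ℝ[X] K (derivative p) := by
  have h : ∀ q : ℝ[X], algebraMap ℝ[X] K q = aeval RatFunc.X q := by
    intro q
    induction q using Polynomial.induction_on with
    | C a => simp [RatFunc.algebraMap_C]
    | add p q hp hq => rw [map_add, map_add, hp, hq]
    | monomial n a ih => simp only [map_mul, RatFunc.algebraMap_X, pow_succ, ← mul_assoc, ih,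
        map_pow, map_mul, aeval_X]
  rw [h, h, Derivation.map_aeval, hD, smul_eq_mul, mul_one]

lemma logmul (D : Derivation ℝ K K) {a b : K} (ha : a ≠ 0) (hb : b ≠ 0) :
    D (a * b) / (a * b) = D a / a + D b / b := by
  rw [D.leibniz, smul_eq_mul, smul_eq_mul]
  field_simp
  ring

lemma logpow (D : Derivation ℝ K K) {a : K} (ha : a ≠ 0) (n : ℕ) :
    D (a ^ n) / (a ^ n) = (n : K) * (D a / a) := by
  induction n with
  | zero => simp
  | succ n ih =>
      rw [pow_succ, logmul D (pow_ne_zero n ha) ha, ih]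
      push_cast
      ring

lemma logdiv (D : Derivation ℝ K K) {a b : K} (ha : a ≠ 0) (hb : b ≠ 0) :
    D (a / b) / (a / b) = D a / a - D b / b := by
  rw [D.leibniz_div, smul_eq_mul, smul_eq_mul, smul_eq_mul]
  field_simp

lemma factor_poly {p : ℝ[X]} (hp : p ≠ 0) :
    ∃ (n₀ n₁ : ℕ) (g : ℝ[X]), g.eval 0 ≠ 0 ∧ g.eval (-1) ≠ 0 ∧
      p = X ^ n₀ * (X + 1) ^ n₁ * g := by
  obtain ⟨p₁, hp₁, hnd₁⟩ := p.exists_eq_pow_rootMultiplicity_mul_and_not_dvd hp 0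
  have hp₁0 : p₁ ≠ 0 := by
    intro h; rw [h, mul_zero] at hp₁; exact hp hp₁
  obtain ⟨g, hg, hnd₂⟩ := p₁.exists_eq_pow_rootMultiplicity_mul_and_not_dvd hp₁0 (-1)
  have hXC : (X - C (-1) : ℝ[X]) = X + 1 := by simp [sub_neg_eq_add]
  refine ⟨p.rootMultiplicity 0, p₁.rootMultiplicity (-1), g, ?_, ?_, ?_⟩
  · have h1 : p₁.eval 0 ≠ 0 := by
      intro h
      exact hnd₁ (dvd_iff_isRoot.mpr h)
    rw [hg] at h1
    simp only [eval_mul, eval_pow] at h1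
    exact fun h => h1 (by simp [h])
  · intro h
    exact hnd₂ ((dvd_iff_isRoot).mpr h)
  · conv_lhs => rw [hp₁, hg]
    rw [hXC]
    simp only [Polynomial.C_0, sub_zero]
    ring

lemma logderiv_decomp (D : Derivation ℝ K K) (hD : D RatFunc.X = 1) (U : K) (hU : U ≠ 0) :
    ∃ (k l : ℤ) (F G : ℝ[X]), G.eval 0 ≠ 0 ∧ G.eval (-1) ≠ 0 ∧
      D U / U = (k : K) * (RatFunc.X)⁻¹ + (l : K) * (RatFunc.X + 1)⁻¹ +
        algebraMap ℝ[X] K F / algebraMap ℝ[X] K G := by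
  obtain ⟨a, b, g, hg0, hg1, hgp⟩ := factor_poly (RatFunc.num_ne_zero hU)
  obtain ⟨a', b', h, hh0, hh1, hhp⟩ := factor_poly (U.denom_ne_zero)
  have hg : g ≠ 0 := fun h => hg0 (by simp [h])
  have hh : h ≠ 0 := fun h' => hh0 (by simp [h'])
  have hx : (RatFunc.X : K) ≠ 0 := RatFunc.X_ne_zero
  have hx1 : (RatFunc.X + 1 : K) ≠ 0 := by
    have : (X + 1 : ℝ[X]) ≠ 0 := fun h => by
      have := congrArg (Polynomial.eval 0) h; simp at this
    simpa [map_add, RatFunc.algebraMap_X, map_one] using RatFunc.algebraMap_ne_zero this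
  have hgK : algebraMap ℝ[X] K g ≠ 0 := RatFunc.algebraMap_ne_zero hg
  have hhK : algebraMap ℝ[X] K h ≠ 0 := RatFunc.algebraMap_ne_zero hh
  refine ⟨(a : ℤ) - a', (b : ℤ) - b', derivative g * h - g * derivative h, g * h,
    by simp [hg0, hh0], by simp [hg1, hh1], ?_⟩
  have keylog : ∀ (n₀ n₁ : ℕ) (q : ℝ[X]), q ≠ 0 →
      D (algebraMap ℝ[X] K (X ^ n₀ * (X + 1) ^ n₁ * q)) / algebraMap ℝ[X] K (X ^ n₀ * (X + 1) ^ n₁ * q)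
        = (n₀ : K) * (RatFunc.X)⁻¹ + (n₁ : K) * (RatFunc.X + 1)⁻¹ +
          algebraMap ℝ[X] K (derivative q) / algebraMap ℝ[X] K q := by
    intro n₀ n₁ q hq
    have hqK : algebraMap ℝ[X] K q ≠ 0 := RatFunc.algebraMap_ne_zero hq
    simp only [map_mul, map_pow, map_add, map_one, RatFunc.algebraMap_X]
    rw [logmul D (mul_ne_zero (pow_ne_zero _ hx) (pow_ne_zero _ hx1)) hqK,
      logmul D (pow_ne_zero _ hx) (pow_ne_zero _ hx1),
      logpow D hx, logpow D hx1, hD, aux_map_poly D hD,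
      D.map_add, hD, D.map_one_eq_zero, add_zero]
    rw [one_div, one_div]
  have hnum : D (algebraMap ℝ[X] K U.num) / algebraMap ℝ[X] K U.num
      = (a : K) * (RatFunc.X)⁻¹ + (b : K) * (RatFunc.X + 1)⁻¹ +
        algebraMap ℝ[X] K (derivative g) / algebraMap ℝ[X] K g := by
    rw [hgp]; exact keylog a b g hg
  have hden : D (algebraMap ℝ[X] K U.denom) / algebraMap ℝ[X] K U.denom
      = (a' : K) * (RatFunc.X)⁻¹ + (b' : K) * (RatFunc.X + 1)⁻¹ +
        algebraMap ℝ[X] K (derivative h) / algebraMap ℝ[X] K h := by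
    rw [hhp]; exact keylog a' b' h hh
  have hUeq : U = algebraMap ℝ[X] K U.num / algebraMap ℝ[X] K U.denom :=
    (RatFunc.num_div_denom U).symm
  rw [hUeq, logdiv D (RatFunc.algebraMap_ne_zero (RatFunc.num_ne_zero hU))
    (RatFunc.algebraMap_ne_zero U.denom_ne_zero), hnum, hden]
  push_cast
  field_simp
  ring

theorem one_div_R_decomposition_and_not_logderivative (c : ℝ)
    (D : Derivation ℝ (RatFunc ℝ) (RatFunc ℝ)) (hD : D RatFunc.X = 1) :
    (RatFunc.X * (RatFunc.X + 1) / (RatFunc.C c * (RatFunc.X + 1) + RatFunc.X))⁻¹ =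
        (RatFunc.X + 1)⁻¹ + RatFunc.C c * RatFunc.X⁻¹ ∧
    (Irrational c →
      ¬ ∃ a : ℝ, a ≠ 0 ∧ ∃ U : RatFunc ℝ, U ≠ 0 ∧
        (RatFunc.X * (RatFunc.X + 1) / (RatFunc.C c * (RatFunc.X + 1) + RatFunc.X))⁻¹ =
          RatFunc.C a * (D U / U)) := by
  have hx : (RatFunc.X : K) ≠ 0 := RatFunc.X_ne_zero
  have hx1 : (RatFunc.X + 1 : K) ≠ 0 := by
    have h1 : (X + 1 : ℝ[X]) ≠ 0 := fun h => by
      have := congrArg (Polynomial.eval 0) h; simp at this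
    simpa [map_add, RatFunc.algebraMap_X, map_one] using RatFunc.algebraMap_ne_zero h1
  have hdenpoly : (C c * (X + 1) + X : ℝ[X]) ≠ 0 := by
    intro h
    have h0 := congrArg (Polynomial.eval 0) h
    have h1 := congrArg (Polynomial.eval 1) h
    simp at h0 h1
    rw [h0] at h1
    simp at h1
  have hden : RatFunc.C c * (RatFunc.X + 1) + RatFunc.X ≠ 0 := by
    have : RatFunc.C c * (RatFunc.X + 1) + RatFunc.X
        = algebraMap ℝ[X] K (C c * (X + 1) + X) := by
      simp [map_add, map_mul, RatFunc.algebraMap_C, RatFunc.algebraMap_X, map_one]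
    rw [this]
    exact RatFunc.algebraMap_ne_zero hdenpoly
  have part1 : (RatFunc.X * (RatFunc.X + 1) / (RatFunc.C c * (RatFunc.X + 1) + RatFunc.X))⁻¹ =
      (RatFunc.X + 1)⁻¹ + RatFunc.C c * RatFunc.X⁻¹ := by
    rw [inv_div]
    field_simp
    ring
  refine ⟨part1, ?_⟩
  intro hirr ⟨A, hA, U, hU, heq⟩
  rw [part1] at heq
  obtain ⟨k, l, F, G, hG0, hG1, hdec⟩ := logderiv_decomp D hD U hU
  rw [hdec] at heq
  have hG : G ≠ 0 := fun h => hG0 (by simp [h])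
  have hGK : algebraMap ℝ[X] K G ≠ 0 := RatFunc.algebraMap_ne_zero hG
  have key : algebraMap ℝ[X] K (X * G + C c * (X + 1) * G) =
      algebraMap ℝ[X] K (C A * (C (k : ℝ) * (X + 1) * G + C (l : ℝ) * X * G + X * (X + 1) * F)) := by
    simp only [map_add, map_mul, RatFunc.algebraMap_C, RatFunc.algebraMap_X, map_one, map_intCast]
    field_simp at heq
    apply mul_right_cancel₀ (mul_ne_zero hx1 hx)
    linear_combination (RatFunc.X + 1) * RatFunc.X * heq
  have keyP := RatFunc.algebraMap_injective ℝ key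
  have e0 := congrArg (Polynomial.eval 0) keyP
  have e1 := congrArg (Polynomial.eval (-1)) keyP
  simp at e0 e1
  have hc : c = A * k :=
    mul_right_cancel₀ hG0 (by linear_combination e0 : c * eval 0 G = A * (k : ℝ) * eval 0 G)
  have h1 : (1 : ℝ) = A * l :=
    mul_right_cancel₀ hG1 (by linear_combination e1 : 1 * eval (-1) G = A * (l : ℝ) * eval (-1) G)
  have hl : (l : ℝ) ≠ 0 := by
    intro h; rw [h, mul_zero] at h1; exact one_ne_zero h1
  refine hirr ⟨(k : ℚ) / (l : ℚ), ?_⟩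
  push_cast
  rw [div_eq_iff hl]
  linear_combination (k : ℝ) * h1 - (l : ℝ) * hc
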